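/- Let b, c, ν, ρ ∈ ℂ with Re(ρ) > 0, Re(c) > 0 and Re(ν) > -1, and let z > 0 be real. Then G_ν^{(b,c)}(z;ρ) = (z/2)^ν / (Γ(ν+1)² Γ(c)) · ∫_0^∞ t^{c+ν-1} e^{-t - ρ/t} · ₀F₃(-; ν+1, (ν+1)/2, (ν+2)/2; -b z² t² / 16) dt. -/

import Mathlib

open Complex MeasureTheory Real Set

/-- Extended Gamma function `Γ_ρ(x) = ∫_0^∞ t^(x-1) e^(-t-ρ/t) dt`. -/
noncomputable def extGamma (ρ x : ℂ) : ℂ :=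
  ∫ t in Ioi (0:ℝ), (t:ℂ) ^ (x - 1) * Complex.exp (-(t:ℂ) - ρ / (t:ℂ))

/-- Generalized Pochhammer symbol `(c;ρ)_μ = Γ_ρ(c+μ)/Γ(c)`. -/
noncomputable def genPoch (c ρ μ : ℂ) : ℂ := extGamma ρ (c + μ) / Complex.Gamma c

/-- Unified four parameter Bessel function `G_ν^{(b,c)}(z;ρ)` with complex order,
powers being principal complex powers. -/
noncomputable def unifiedG (b c ν ρ z : ℂ) : ℂ :=
  ∑' k : ℕ, (-b) ^ k * genPoch c ρ (2 * (k:ℂ) + ν) * (z / 2) ^ (2 * (k:ℂ) + ν) /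
    ((k.factorial : ℂ) * Complex.Gamma (ν + (k:ℂ) + 1) * Complex.Gamma (ν + 2 * (k:ℂ) + 1))

/-- Unified four parameter Bessel function with integer order, powers being integer powers. -/
noncomputable def unifiedGInt (b c ρ : ℂ) (ν : ℤ) (z : ℂ) : ℂ :=
  ∑' k : ℕ, (-b) ^ k * genPoch c ρ (2 * (k:ℂ) + (ν:ℂ)) * (z / 2) ^ (2 * (k:ℤ) + ν) /
    ((k.factorial : ℂ) * Complex.Gamma ((ν:ℂ) + (k:ℂ) + 1) * Complex.Gamma ((ν:ℂ) + 2 * (k:ℂ) + 1))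

/-- Pochhammer symbol `(a)_k = Γ(a+k)/Γ(a)`. -/
noncomputable def poch (a : ℂ) (k : ℕ) : ℂ := Complex.Gamma (a + (k:ℂ)) / Complex.Gamma a

/-- Generalized hypergeometric function `₀F₃`. -/
noncomputable def hyp0F3 (a₁ a₂ a₃ w : ℂ) : ℂ :=
  ∑' k : ℕ, w ^ k / (poch a₁ k * poch a₂ k * poch a₃ k * (k.factorial : ℂ))

/-- Generalized hypergeometric function `₂F₃`. -/
noncomputable def hyp2F3 (a₁ a₂ b₁ b₂ b₃ w : ℂ) : ℂ :=
  ∑' k : ℕ, poch a₁ k * poch a₂ k * w ^ k /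
    (poch b₁ k * poch b₂ k * poch b₃ k * (k.factorial : ℂ))

/-- Bessel function of the first kind `J_μ(z)` for real `z > 0`. -/
noncomputable def besselJ (μ : ℂ) (z : ℝ) : ℂ :=
  ∑' k : ℕ, (-1) ^ k * ((z:ℂ) / 2) ^ (2 * (k:ℂ) + μ) /
    ((k.factorial : ℂ) * Complex.Gamma (μ + (k:ℂ) + 1))

/-- Generalized four parameter spherical Bessel function
`g_ν^{(b,c)}(z;ρ) = √(π/(2z)) · G_{ν+1/2}^{(b,c-1/2)}(z;ρ)`. -/
noncomputable def sphG (b c ν ρ : ℂ) (z : ℝ) : ℂ :=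
  (Real.sqrt (π / (2 * z)) : ℂ) * unifiedG b (c - 1/2) (ν + 1/2) ρ (z:ℂ)

/-- Generalized four parameter Bessel-Clifford function
`C_ν^{(b,λ)}(z;ρ) = z^{-ν/2} · G_ν^{(b,λ)}(2√z;ρ)` for real `z > 0`. -/
noncomputable def cliffC (b lam ν ρ : ℂ) (z : ℝ) : ℂ :=
  (z:ℂ) ^ (-ν / 2) * unifiedG b lam ν ρ ((2 * Real.sqrt z : ℝ) : ℂ)

namespace Stmt2Aux


lemma ne_zero_of_re_pos' {a : ℂ} (h : 0 < a.re) : a ≠ 0 := by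
  intro h0; rw [h0] at h; simp at h

lemma norm_integrand (s ρ : ℂ) {t : ℝ} (ht : 0 < t) :
    ‖(t:ℂ) ^ (s - 1) * Complex.exp (-(t:ℂ) - ρ / (t:ℂ))‖
      = t ^ (s.re - 1) * Real.exp (-t - ρ.re / t) := by
  have h1 : (s - 1).re = s.re - 1 := by simp
  have h2 : (-(t:ℂ) - ρ / (t:ℂ)).re = -t - ρ.re / t := by
    simp [Complex.sub_re, Complex.neg_re, Complex.div_ofReal_re]
  rw [norm_mul,
    Complex.norm_cpow_eq_rpow_re_of_pos ht, Complex.norm_exp, h1, h2]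

lemma meas_integrand (s ρ : ℂ) :
    AEStronglyMeasurable (fun t : ℝ => (t:ℂ) ^ (s - 1) * Complex.exp (-(t:ℂ) - ρ / (t:ℂ)))
      (volume.restrict (Ioi 0)) := by
  refine ContinuousOn.aestronglyMeasurable (fun t ht => ?_) measurableSet_Ioi
  have ht0 : t ≠ 0 := ne_of_gt ht
  refine ContinuousAt.continuousWithinAt ?_
  refine ContinuousAt.mul ?_ ?_
  · exact Complex.continuousAt_ofReal_cpow_const t (s - 1) (Or.inr ht0)
  · refine Complex.continuous_exp.continuousAt.comp ?_
    refine ContinuousAt.sub ?_ ?_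
    · exact (Complex.continuous_ofReal.continuousAt).neg
    · exact ContinuousAt.div continuousAt_const Complex.continuous_ofReal.continuousAt
        (by exact_mod_cast ht0)

/-- `exp (-x) ≤ n! / x ^ n` for `x > 0`. -/
lemma exp_neg_le {x : ℝ} (hx : 0 < x) (n : ℕ) :
    Real.exp (-x) ≤ (n.factorial : ℝ) / x ^ n := by
  have h := Real.pow_div_factorial_le_exp x hx.le n
  have hxn : (0:ℝ) < x ^ n / n.factorial := by positivity
  rw [Real.exp_neg]
  calc (Real.exp x)⁻¹ ≤ (x ^ n / n.factorial)⁻¹ := by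
        exact inv_anti₀ hxn h
    _ = (n.factorial : ℝ) / x ^ n := by rw [inv_div]

lemma real_integrable (a : ℝ) {q : ℝ} (hq : 0 < q) :
    IntegrableOn (fun t : ℝ => t ^ a * Real.exp (-t - q / t)) (Ioi 0) := by
  have hIoi : Ioc (0:ℝ) 1 ∪ Ioi 1 = Ioi 0 := Ioc_union_Ioi_eq_Ioi zero_le_one
  rw [← hIoi]
  have hmeas : ∀ (u : Set ℝ), MeasurableSet u → u ⊆ Ioi 0 → AEStronglyMeasurable
      (fun t : ℝ => t ^ a * Real.exp (-t - q / t)) (volume.restrict u) := by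
    intro u hu hsub
    refine ContinuousOn.aestronglyMeasurable (fun t ht => ?_) hu
    have ht0 : (0:ℝ) < t := hsub ht
    refine ContinuousAt.continuousWithinAt ?_
    exact (Real.continuousAt_rpow_const t a (Or.inl (ne_of_gt ht0))).mul
      ((Real.continuous_exp.continuousAt).comp
        ((continuousAt_id.neg).sub (continuousAt_const.div continuousAt_id (ne_of_gt ht0))))
  refine IntegrableOn.union ?_ ?_
  · -- on Ioc 0 1 : bounded by constant
    set n : ℕ := ⌈-a⌉₊ with hn
    have han : 0 ≤ a + n := by
      have := Nat.le_ceil (-a)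
      simp only [← hn] at this
      linarith
    refine Integrable.mono' ((integrableOn_const_iff (C := (n.factorial : ℝ) / q ^ n)).mpr (Or.inr measure_Ioc_lt_top))
      (hmeas _ measurableSet_Ioc Ioc_subset_Ioi_self) ?_
    rw [ae_restrict_iff' measurableSet_Ioc]
    refine ae_of_all _ (fun t ht => ?_)
    obtain ⟨ht0, ht1⟩ := ht
    have h1 : Real.exp (-t - q / t) ≤ Real.exp (-(q / t)) := by
      apply Real.exp_le_exp.mpr; linarith
    have h2 : Real.exp (-(q / t)) ≤ (n.factorial : ℝ) / (q / t) ^ n :=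
      exp_neg_le (by positivity) n
    have h3 : (n.factorial : ℝ) / (q / t) ^ n = (n.factorial : ℝ) / q ^ n * t ^ n := by
      rw [div_pow]; field_simp
    have h4 : t ^ a * Real.exp (-t - q / t) ≤ (n.factorial : ℝ) / q ^ n * (t ^ a * t ^ n) := by
      calc t ^ a * Real.exp (-t - q / t) ≤ t ^ a * ((n.factorial : ℝ) / q ^ n * t ^ n) := by
            rw [← h3]
            exact mul_le_mul_of_nonneg_left (h1.trans h2) (Real.rpow_nonneg ht0.le a)
        _ = (n.factorial : ℝ) / q ^ n * (t ^ a * t ^ n) := by ring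
    have h5 : t ^ a * (t:ℝ) ^ n ≤ 1 := by
      rw [← Real.rpow_natCast t n, ← Real.rpow_add ht0]
      exact Real.rpow_le_one ht0.le ht1 han
    have hnorm : ‖t ^ a * Real.exp (-t - q / t)‖ = t ^ a * Real.exp (-t - q / t) := by
      rw [Real.norm_eq_abs]; exact _root_.abs_of_nonneg (by positivity)
    rw [hnorm]
    calc t ^ a * Real.exp (-t - q / t) ≤ (n.factorial : ℝ) / q ^ n * (t ^ a * t ^ n) := h4
      _ ≤ (n.factorial : ℝ) / q ^ n * 1 := by
          exact mul_le_mul_of_nonneg_left h5 (by positivity)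
      _ = (n.factorial : ℝ) / q ^ n := mul_one _
  · -- on Ioi 1 : bounded by t ^ m * exp (-t)
    set m : ℕ := ⌈a⌉₊ with hm
    have ham : a ≤ m := Nat.le_ceil a
    have hint : IntegrableOn (fun t : ℝ => Real.exp (-t) * t ^ ((m:ℝ) + 1 - 1)) (Ioi 1) :=
      (Real.GammaIntegral_convergent (by positivity : (0:ℝ) < (m:ℝ) + 1)).mono_set
        (Ioi_subset_Ioi zero_le_one)
    refine Integrable.mono' hint (hmeas _ measurableSet_Ioi (Ioi_subset_Ioi zero_le_one)) ?_
    rw [ae_restrict_iff' measurableSet_Ioi]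
    refine ae_of_all _ (fun t ht => ?_)
    have ht1 : (1:ℝ) < t := ht
    have ht0 : (0:ℝ) < t := lt_trans zero_lt_one ht1
    have hnorm : ‖t ^ a * Real.exp (-t - q / t)‖ = t ^ a * Real.exp (-t - q / t) := by
      rw [Real.norm_eq_abs]; exact _root_.abs_of_nonneg (by positivity)
    rw [hnorm]
    calc t ^ a * Real.exp (-t - q / t) ≤ t ^ (m:ℝ) * Real.exp (-t) := by
          refine mul_le_mul ?_ ?_ (Real.exp_pos _).le (Real.rpow_nonneg ht0.le _)
          · exact Real.rpow_le_rpow_of_exponent_le ht1.le ham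
          · apply Real.exp_le_exp.mpr
            have : 0 < q / t := by positivity
            linarith
      _ = Real.exp (-t) * t ^ ((m:ℝ) + 1 - 1) := by rw [add_sub_cancel_right]; ring

/-- Main integrability of the extended-Gamma-type integrand. -/
lemma complex_integrable (s : ℂ) {ρ : ℂ} (hρ : 0 < ρ.re) :
    IntegrableOn (fun t : ℝ => (t:ℂ) ^ (s - 1) * Complex.exp (-(t:ℂ) - ρ / (t:ℂ))) (Ioi 0) := by
  refine Integrable.mono' ((real_integrable (s.re - 1) hρ)) (meas_integrand s ρ) ?_
  rw [ae_restrict_iff' measurableSet_Ioi]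
  exact ae_of_all _ (fun t ht => le_of_eq (norm_integrand s ρ ht))




lemma re_add_nat_pos {a : ℂ} (h : 0 < a.re) (k : ℕ) : 0 < (a + (k:ℂ)).re := by
  simp only [Complex.add_re, Complex.natCast_re]
  positivity

lemma poch_zero (a : ℂ) (ha : Complex.Gamma a ≠ 0) : poch a 0 = 1 := by
  simp [poch, div_self ha]

lemma poch_succ {a : ℂ} (ha : 0 < a.re) (k : ℕ) :
    poch a (k + 1) = poch a k * (a + (k:ℂ)) := by
  unfold poch
  have h1 : a + ((k:ℕ)+1 : ℕ) = (a + (k:ℂ)) + 1 := by push_cast; ring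
  rw [h1, Complex.Gamma_add_one _ (ne_zero_of_re_pos' (re_add_nat_pos ha k))]
  ring

lemma poch_ne_zero {a : ℂ} (ha : 0 < a.re) (k : ℕ) : poch a k ≠ 0 :=
  div_ne_zero (Complex.Gamma_ne_zero_of_re_pos (re_add_nat_pos ha k))
    (Complex.Gamma_ne_zero_of_re_pos ha)

lemma Gamma_eq_mul_poch {a : ℂ} (ha : 0 < a.re) (k : ℕ) :
    Complex.Gamma (a + (k:ℂ)) = Complex.Gamma a * poch a k := by
  rw [poch, mul_div_cancel₀ _ (Complex.Gamma_ne_zero_of_re_pos ha)]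

lemma norm_poch_succ_ge {a : ℂ} (ha : 0 < a.re) (k : ℕ) :
    ‖poch a (k + 1)‖ ≥ ‖poch a k‖ * k := by
  rw [poch_succ ha, norm_mul]
  refine mul_le_mul_of_nonneg_left ?_ (norm_nonneg _)
  calc (k:ℝ) ≤ (a + (k:ℂ)).re := by
        simp only [Complex.add_re, Complex.natCast_re]; linarith
    _ ≤ ‖a + (k:ℂ)‖ := Complex.re_le_norm _

/-- Legendre-type duplication by induction. -/
lemma Gamma_dup {a : ℂ} (ha : 0 < a.re) (k : ℕ) :
    Complex.Gamma (a + 2 * (k:ℂ)) =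
      Complex.Gamma a * 4 ^ k * poch (a / 2) k * poch ((a + 1) / 2) k := by
  have ha2 : 0 < (a / 2).re := by
    have : (a / 2).re = a.re / 2 := by
      rw [show (2:ℂ) = ((2:ℝ):ℂ) by norm_num, Complex.div_ofReal_re]
    rw [this]; positivity
  have ha12 : 0 < ((a + 1) / 2).re := by
    have : ((a + 1) / 2).re = (a.re + 1) / 2 := by
      rw [show (2:ℂ) = ((2:ℝ):ℂ) by norm_num, Complex.div_ofReal_re, Complex.add_re,
        Complex.one_re]
    rw [this]; positivity
  induction k with
  | zero =>
      simp [poch_zero _ (Complex.Gamma_ne_zero_of_re_pos ha2),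
        poch_zero _ (Complex.Gamma_ne_zero_of_re_pos ha12)]
  | succ k ih =>
      have h2k : 0 < (a + 2 * (k:ℂ)).re := by
        simp only [Complex.add_re, Complex.mul_re, Complex.natCast_re, Complex.natCast_im]
        norm_num; positivity
      have h2k1 : 0 < (a + 2 * (k:ℂ) + 1).re := by
        simp only [Complex.add_re, Complex.mul_re, Complex.natCast_re, Complex.natCast_im,
          Complex.one_re]
        norm_num; positivity
      have e1 : a + 2 * ((k:ℂ) + 1) = (a + 2 * (k:ℂ) + 1) + 1 := by ring
      push_cast
      rw [e1, Complex.Gamma_add_one _ (ne_zero_of_re_pos' h2k1),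
        show a + 2 * (k:ℂ) + 1 = (a + 2 * (k:ℂ)) + 1 by ring,
        Complex.Gamma_add_one _ (ne_zero_of_re_pos' h2k), ih,
        poch_succ ha2, poch_succ ha12]
      push_cast
      ring




lemma norm_add_nat_ge {a : ℂ} (ha : 0 < a.re) (k : ℕ) : (k:ℝ) ≤ ‖a + (k:ℂ)‖ := by
  calc (k:ℝ) ≤ (a + (k:ℂ)).re := by
        simp only [Complex.add_re, Complex.natCast_re]; linarith
    _ ≤ ‖a + (k:ℂ)‖ := Complex.re_le_norm _

lemma summable_aux (w0 a1 a2 a3 : ℂ) (h1 : 0 < a1.re) (h2 : 0 < a2.re) (h3 : 0 < a3.re)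
    (r : ℝ) :
    Summable (fun k : ℕ =>
      ‖w0 ^ k / (poch a1 k * poch a2 k * poch a3 k * (k.factorial : ℂ))‖ *
        Real.Gamma (r + 2 * k)) := by
  set W := ‖w0‖ with hW
  have hW0 : 0 ≤ W := norm_nonneg _
  have hfg : ∀ n : ℕ, ‖w0 ^ n / (poch a1 n * poch a2 n * poch a3 n * (n.factorial : ℂ))‖
      = W ^ n / (‖poch a1 n‖ * ‖poch a2 n‖ * ‖poch a3 n‖ * (n.factorial : ℝ)) := by
    intro n
    rw [norm_div, norm_pow, norm_mul, norm_mul, norm_mul, Complex.norm_natCast]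
  apply summable_of_ratio_norm_eventually_le (r := 1/2) (by norm_num)
  rw [Filter.eventually_atTop]
  refine ⟨⌈|r|⌉₊ + ⌈18 * W⌉₊ + 1, fun k hk => ?_⟩
  have hk1 : |r| + 1 ≤ (k:ℝ) := by
    have h := Nat.le_ceil |r|
    have : (⌈|r|⌉₊ + 1 : ℕ) ≤ k := by omega
    have h2 : ((⌈|r|⌉₊ + 1 : ℕ) : ℝ) ≤ (k:ℝ) := by exact_mod_cast this
    push_cast at h2
    linarith
  have hk2 : 18 * W ≤ (k:ℝ) := by
    have h := Nat.le_ceil (18 * W)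
    have : (⌈18 * W⌉₊ : ℕ) ≤ k := by omega
    have h2 : ((⌈18 * W⌉₊ : ℕ) : ℝ) ≤ (k:ℝ) := by exact_mod_cast this
    linarith
  have hkp : (1:ℝ) ≤ (k:ℝ) := by
    have : |r| ≥ 0 := abs_nonneg r
    linarith
  have hrk : 0 < r + 2 * (k:ℝ) := by
    have : -|r| ≤ r := neg_abs_le r
    linarith
  have hrk1 : 0 < r + 2 * (k:ℝ) + 1 := by linarith
  -- Gamma recurrence
  have hGrec : Real.Gamma (r + 2 * ((k:ℕ)+1:ℕ)) =
      (r + 2 * k + 1) * ((r + 2 * k) * Real.Gamma (r + 2 * k)) := by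
    push_cast
    rw [show r + 2 * ((k:ℝ) + 1) = (r + 2 * k + 1) + 1 by ring,
      Real.Gamma_add_one (ne_of_gt hrk1),
      show r + 2 * (k:ℝ) + 1 = (r + 2 * k) + 1 by ring,
      Real.Gamma_add_one (ne_of_gt hrk)]
  have hGpos : 0 < Real.Gamma (r + 2 * k) := Real.Gamma_pos_of_pos hrk
  have hGpos' : 0 < Real.Gamma (r + 2 * ((k:ℕ)+1:ℕ)) := by
    rw [hGrec]; positivity
  -- positivity of norms
  have hp1 : 0 < ‖poch a1 k‖ := norm_pos_iff.mpr (poch_ne_zero h1 k)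
  have hp2 : 0 < ‖poch a2 k‖ := norm_pos_iff.mpr (poch_ne_zero h2 k)
  have hp3 : 0 < ‖poch a3 k‖ := norm_pos_iff.mpr (poch_ne_zero h3 k)
  have hfac : (0:ℝ) < (k.factorial : ℝ) := by exact_mod_cast k.factorial_pos
  have hn1 : (k:ℝ) ≤ ‖a1 + (k:ℂ)‖ := norm_add_nat_ge h1 k
  have hn2 : (k:ℝ) ≤ ‖a2 + (k:ℂ)‖ := norm_add_nat_ge h2 k
  have hn3 : (k:ℝ) ≤ ‖a3 + (k:ℂ)‖ := norm_add_nat_ge h3 k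
  have hn1p : (0:ℝ) < ‖a1 + (k:ℂ)‖ := lt_of_lt_of_le (by linarith) hn1
  have hn2p : (0:ℝ) < ‖a2 + (k:ℂ)‖ := lt_of_lt_of_le (by linarith) hn2
  have hn3p : (0:ℝ) < ‖a3 + (k:ℂ)‖ := lt_of_lt_of_le (by linarith) hn3
  -- rewrite both terms
  rw [hfg, hfg]
  rw [Real.norm_eq_abs, Real.norm_eq_abs,
    _root_.abs_of_nonneg (by positivity), _root_.abs_of_nonneg (by positivity)]
  rw [poch_succ h1, poch_succ h2, poch_succ h3, hGrec]
  rw [norm_mul, norm_mul, norm_mul]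
  rw [Nat.factorial_succ]
  push_cast
  -- key polynomial inequality
  have key : W * ((r + 2 * k) * (r + 2 * k + 1)) ≤
      1/2 * (‖a1 + (k:ℂ)‖ * ‖a2 + (k:ℂ)‖ * ‖a3 + (k:ℂ)‖ * ((k:ℝ) + 1)) := by
    have e1 : r + 2 * (k:ℝ) ≤ 3 * k := by
      have : r ≤ |r| := le_abs_self r
      linarith
    have e2 : r + 2 * (k:ℝ) + 1 ≤ 3 * k := by
      have : r ≤ |r| := le_abs_self r
      linarith
    calc W * ((r + 2 * k) * (r + 2 * k + 1)) ≤ W * (3 * k * (3 * k)) := by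
          refine mul_le_mul_of_nonneg_left ?_ hW0
          exact mul_le_mul e1 e2 (by linarith) (by positivity)
      _ = 9 * W * ((k:ℝ) * k) := by ring
      _ ≤ (k / 2) * ((k:ℝ) * k) := by
          refine mul_le_mul_of_nonneg_right (by linarith) (by positivity)
      _ = 1/2 * ((k:ℝ) * (k:ℝ) * (k:ℝ) * 1) := by ring
      _ ≤ 1/2 * (‖a1 + (k:ℂ)‖ * ‖a2 + (k:ℂ)‖ * ‖a3 + (k:ℂ)‖ * ((k:ℝ) + 1)) := by
          gcongr <;> linarith
  -- now the ratio bound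
  have lhs_eq : W ^ (k+1) / (‖poch a1 k‖ * ‖a1 + (k:ℂ)‖ * (‖poch a2 k‖ * ‖a2 + (k:ℂ)‖) *
        (‖poch a3 k‖ * ‖a3 + (k:ℂ)‖) * (((k:ℝ) + 1) * (k.factorial : ℝ))) *
        ((r + 2 * k + 1) * ((r + 2 * k) * Real.Gamma (r + 2 * k)))
      = (W ^ k / (‖poch a1 k‖ * ‖poch a2 k‖ * ‖poch a3 k‖ * (k.factorial : ℝ)) *
          Real.Gamma (r + 2 * k)) *
        (W * ((r + 2 * k) * (r + 2 * k + 1)) /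
          (‖a1 + (k:ℂ)‖ * ‖a2 + (k:ℂ)‖ * ‖a3 + (k:ℂ)‖ * ((k:ℝ) + 1))) := by
    field_simp
    ring
  rw [lhs_eq]
  have base_nonneg : 0 ≤ W ^ k / (‖poch a1 k‖ * ‖poch a2 k‖ * ‖poch a3 k‖ * (k.factorial : ℝ)) *
      Real.Gamma (r + 2 * k) := by positivity
  calc (W ^ k / (‖poch a1 k‖ * ‖poch a2 k‖ * ‖poch a3 k‖ * (k.factorial : ℝ)) *
          Real.Gamma (r + 2 * k)) *
        (W * ((r + 2 * k) * (r + 2 * k + 1)) /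
          (‖a1 + (k:ℂ)‖ * ‖a2 + (k:ℂ)‖ * ‖a3 + (k:ℂ)‖ * ((k:ℝ) + 1)))
      ≤ (W ^ k / (‖poch a1 k‖ * ‖poch a2 k‖ * ‖poch a3 k‖ * (k.factorial : ℝ)) *
          Real.Gamma (r + 2 * k)) * (1/2) := by
        refine mul_le_mul_of_nonneg_left ?_ base_nonneg
        rw [div_le_iff₀ (by positivity)]
        calc W * ((r + 2 * k) * (r + 2 * k + 1))
            ≤ 1/2 * (‖a1 + (k:ℂ)‖ * ‖a2 + (k:ℂ)‖ * ‖a3 + (k:ℂ)‖ * ((k:ℝ) + 1)) := key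
          _ = 1/2 * (‖a1 + (k:ℂ)‖ * ‖a2 + (k:ℂ)‖ * ‖a3 + (k:ℂ)‖ * ((k:ℝ) + 1)) := rfl
    _ = 1/2 * (W ^ k / (‖poch a1 k‖ * ‖poch a2 k‖ * ‖poch a3 k‖ * (k.factorial : ℝ)) *
          Real.Gamma (r + 2 * k)) := by ring


lemma re_pos_aux1 {ν : ℂ} (hν : -1 < ν.re) : 0 < (ν + 1).re := by
  simp only [Complex.add_re, Complex.one_re]; linarith

lemma re_pos_aux2 {ν : ℂ} (hν : -1 < ν.re) : 0 < ((ν + 1) / 2).re := by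
  have : ((ν + 1) / 2).re = (ν.re + 1) / 2 := by
    rw [show (2:ℂ) = ((2:ℝ):ℂ) by norm_num, Complex.div_ofReal_re, Complex.add_re,
      Complex.one_re]
  rw [this]; linarith

lemma re_pos_aux3 {ν : ℂ} (hν : -1 < ν.re) : 0 < ((ν + 2) / 2).re := by
  have : ((ν + 2) / 2).re = (ν.re + 2) / 2 := by
    rw [show (2:ℂ) = ((2:ℝ):ℂ) by norm_num, Complex.div_ofReal_re, Complex.add_re]
    norm_num
  rw [this]; linarith

lemma term_eq (b c ν ρ : ℂ) (hc : 0 < c.re) (hν : -1 < ν.re) {z : ℂ} (hz2 : z / 2 ≠ 0)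
    (k : ℕ) :
    (-b) ^ k * genPoch c ρ (2 * (k:ℂ) + ν) * (z / 2) ^ (2 * (k:ℂ) + ν) /
      ((k.factorial : ℂ) * Complex.Gamma (ν + (k:ℂ) + 1) * Complex.Gamma (ν + 2 * (k:ℂ) + 1))
    = (z / 2) ^ ν / (Complex.Gamma (ν + 1) ^ 2 * Complex.Gamma c) *
        (extGamma ρ (c + ν + 2 * (k:ℂ)) *
          ((-b * z ^ 2 / 16) ^ k /
            (poch (ν + 1) k * poch ((ν + 1) / 2) k * poch ((ν + 2) / 2) k *
              (k.factorial : ℂ)))) := by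
  have ha1 := re_pos_aux1 hν
  have ha2 := re_pos_aux2 hν
  have ha3 := re_pos_aux3 hν
  have hG1 : Complex.Gamma (ν + (k:ℂ) + 1) = Complex.Gamma (ν + 1) * poch (ν + 1) k := by
    rw [show ν + (k:ℂ) + 1 = (ν + 1) + (k:ℂ) by ring, Gamma_eq_mul_poch ha1]
  have hG2 : Complex.Gamma (ν + 2 * (k:ℂ) + 1) =
      Complex.Gamma (ν + 1) * 4 ^ k * poch ((ν + 1) / 2) k * poch ((ν + 2) / 2) k := by
    rw [show ν + 2 * (k:ℂ) + 1 = (ν + 1) + 2 * (k:ℂ) by ring, Gamma_dup ha1,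
      show ((ν + 1) + 1) / 2 = (ν + 2) / 2 by ring]
  have hzpow : (z / 2) ^ (2 * (k:ℂ) + ν) = ((z / 2) ^ 2) ^ k * (z / 2) ^ ν := by
    rw [Complex.cpow_add _ _ hz2, show (2 : ℂ) * (k:ℂ) = ((2 * k : ℕ) : ℂ) by push_cast; ring,
      Complex.cpow_natCast, pow_mul]
  have hgen : genPoch c ρ (2 * (k:ℂ) + ν) = extGamma ρ (c + ν + 2 * (k:ℂ)) / Complex.Gamma c := by
    rw [genPoch, show c + (2 * (k:ℂ) + ν) = c + ν + 2 * (k:ℂ) by ring]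
  rw [hG1, hG2, hzpow, hgen]
  have hGc : Complex.Gamma c ≠ 0 := Complex.Gamma_ne_zero_of_re_pos hc
  have hGν : Complex.Gamma (ν + 1) ≠ 0 := Complex.Gamma_ne_zero_of_re_pos ha1
  have hp1 := poch_ne_zero ha1 k
  have hp2 := poch_ne_zero ha2 k
  have hp3 := poch_ne_zero ha3 k
  have hfac : (k.factorial : ℂ) ≠ 0 := by exact_mod_cast k.factorial_ne_zero
  have h4 : ((4:ℂ)) ^ k ≠ 0 := pow_ne_zero _ (by norm_num)
  have h16 : (-b * z ^ 2 / 16) ^ k = (-b) ^ k * ((z / 2) ^ 2) ^ k / 4 ^ k := by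
    rw [← mul_pow, ← div_pow]
    congr 1
    ring
  rw [h16]
  field_simp


end Stmt2Aux

open Stmt2Aux Filter in
theorem stmt2 (b c ν ρ : ℂ) (hρ : 0 < ρ.re) (hc : 0 < c.re) (hν : -1 < ν.re)
    (z : ℝ) (hz : 0 < z) :
    unifiedG b c ν ρ (z:ℂ) =
      ((z:ℂ) / 2) ^ ν / (Complex.Gamma (ν + 1) ^ 2 * Complex.Gamma c) *
        ∫ t in Ioi (0:ℝ), (t:ℂ) ^ (c + ν - 1) * Complex.exp (-(t:ℂ) - ρ / (t:ℂ)) *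
          hyp0F3 (ν + 1) ((ν + 1) / 2) ((ν + 2) / 2) (-b * (z:ℂ) ^ 2 * (t:ℂ) ^ 2 / 16) := by
  
  have hz0 : ((z:ℝ):ℂ) ≠ 0 := by exact_mod_cast ne_of_gt hz
  have hz2 : ((z:ℂ)/2) ≠ 0 := div_ne_zero hz0 two_ne_zero
  have ha1 := re_pos_aux1 hν
  have ha2 := re_pos_aux2 hν
  have ha3 := re_pos_aux3 hν
  set w0 : ℂ := -b * (z:ℂ) ^ 2 / 16 with hw0
  set F : ℕ → ℝ → ℂ := fun k t =>
    (t:ℂ) ^ (c + ν + 2 * (k:ℂ) - 1) * Complex.exp (-(t:ℂ) - ρ / (t:ℂ)) *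
      (w0 ^ k / (poch (ν + 1) k * poch ((ν + 1) / 2) k * poch ((ν + 2) / 2) k *
        (k.factorial : ℂ))) with hF
  have hInt : ∀ k : ℕ, Integrable (F k) (volume.restrict (Ioi 0)) := fun k =>
    (complex_integrable (c + ν + 2 * (k:ℂ)) hρ).mul_const _
  set r : ℝ := c.re + ν.re with hr
  have hsre : ∀ k : ℕ, (c + ν + 2 * (k:ℂ)).re = r + 2 * k := by
    intro k
    simp [Complex.add_re, Complex.mul_re, hr]
  have hSum : Summable fun k : ℕ => ∫ t in Ioi (0:ℝ), ‖F k t‖ := by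
    rw [← summable_nat_add_iff 1]
    have hu : Summable (fun k : ℕ =>
        ‖w0 ^ k / (poch (ν+1) k * poch ((ν+1)/2) k * poch ((ν+2)/2) k * (k.factorial : ℂ))‖ *
          Real.Gamma (r + 2 * k)) := summable_aux w0 _ _ _ ha1 ha2 ha3 r
    have hu1 := (summable_nat_add_iff 1).mpr hu
    refine Summable.of_nonneg_of_le (fun k => integral_nonneg (fun t => norm_nonneg _))
      (fun k => ?_) hu1
    have hrν : -1 < r := by rw [hr]; linarith
    have hpos : (0:ℝ) < r + 2 * ((k+1 : ℕ):ℝ) := by push_cast; linarith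
    set Ck : ℝ := ‖w0 ^ (k+1) / (poch (ν+1) (k+1) * poch ((ν+1)/2) (k+1) *
      poch ((ν+2)/2) (k+1) * ((k+1).factorial : ℂ))‖ with hCk
    calc ∫ t in Ioi (0:ℝ), ‖F (k+1) t‖
        ≤ ∫ t in Ioi (0:ℝ), Ck * (Real.exp (-t) * t ^ (r + 2 * ((k+1 : ℕ):ℝ) - 1)) := by
          refine integral_mono_of_nonneg (ae_of_all _ fun t => norm_nonneg _)
            ((Real.GammaIntegral_convergent hpos).const_mul Ck) ?_
          filter_upwards [ae_restrict_mem measurableSet_Ioi] with t ht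
          have ht0 : (0:ℝ) < t := ht
          have h1 : ‖F (k+1) t‖ =
              (t ^ ((c + ν + 2 * ((k+1:ℕ):ℂ)).re - 1) * Real.exp (-t - ρ.re / t)) * Ck := by
            rw [hF]
            simp only []
            rw [norm_mul, norm_integrand (c + ν + 2 * ((k+1:ℕ):ℂ)) ρ ht0, hCk]
          rw [h1, hsre (k+1)]
          have h2 : Real.exp (-t - ρ.re / t) ≤ Real.exp (-t) := by
            apply Real.exp_le_exp.mpr
            have : 0 < ρ.re / t := by positivity
            linarith
          have h3 : (0:ℝ) ≤ t ^ (r + 2 * ((k+1:ℕ):ℝ) - 1) := Real.rpow_nonneg ht0.le _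
          have h4 : (0:ℝ) ≤ Ck := norm_nonneg _
          calc t ^ (r + 2 * ((k+1:ℕ):ℝ) - 1) * Real.exp (-t - ρ.re / t) * Ck
              ≤ t ^ (r + 2 * ((k+1:ℕ):ℝ) - 1) * Real.exp (-t) * Ck := by
                refine mul_le_mul_of_nonneg_right (mul_le_mul_of_nonneg_left h2 h3) h4
            _ = Ck * (Real.exp (-t) * t ^ (r + 2 * ((k+1:ℕ):ℝ) - 1)) := by ring
      _ = Ck * Real.Gamma (r + 2 * ((k+1 : ℕ):ℝ)) := by
          rw [MeasureTheory.integral_const_mul, ← Real.Gamma_eq_integral hpos]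
      _ = ‖w0 ^ (k+1) / (poch (ν+1) (k+1) * poch ((ν+1)/2) (k+1) * poch ((ν+2)/2) (k+1) *
            ((k+1).factorial : ℂ))‖ * Real.Gamma (r + 2 * ((k+1:ℕ):ℝ)) := by rw [hCk]
  have hpt : EqOn (fun t : ℝ => (t:ℂ) ^ (c + ν - 1) * Complex.exp (-(t:ℂ) - ρ / (t:ℂ)) *
      hyp0F3 (ν + 1) ((ν + 1) / 2) ((ν + 2) / 2) (-b * (z:ℂ) ^ 2 * (t:ℂ) ^ 2 / 16))
      (fun t : ℝ => ∑' k, F k t) (Ioi 0) := by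
    intro t ht
    have ht0 : (0:ℝ) < t := ht
    have htC : (t:ℂ) ≠ 0 := by exact_mod_cast ne_of_gt ht0
    simp only [hyp0F3]
    rw [← tsum_mul_left]
    refine tsum_congr fun k => ?_
    have harg : -b * (z:ℂ) ^ 2 * (t:ℂ) ^ 2 / 16 = w0 * (t:ℂ) ^ 2 := by rw [hw0]; ring
    have hpow : (t:ℂ) ^ (c + ν + 2 * (k:ℂ) - 1) = (t:ℂ) ^ (c + ν - 1) * ((t:ℂ) ^ 2) ^ k := by
      rw [show c + ν + 2 * (k:ℂ) - 1 = (c + ν - 1) + ((2 * k : ℕ) : ℂ) by push_cast; ring,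
        Complex.cpow_add _ _ htC, Complex.cpow_natCast, pow_mul]
    rw [hF]
    simp only []
    rw [harg, mul_pow, hpow]
    ring
  have hIF : ∀ k : ℕ, (∫ t in Ioi (0:ℝ), F k t) = extGamma ρ (c + ν + 2 * (k:ℂ)) *
      (w0 ^ k / (poch (ν + 1) k * poch ((ν + 1) / 2) k * poch ((ν + 2) / 2) k *
        (k.factorial : ℂ))) := by
    intro k
    rw [hF, extGamma]
    exact MeasureTheory.integral_mul_const _ _
  have key : (∫ t in Ioi (0:ℝ), (t:ℂ) ^ (c + ν - 1) * Complex.exp (-(t:ℂ) - ρ / (t:ℂ)) *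
      hyp0F3 (ν + 1) ((ν + 1) / 2) ((ν + 2) / 2) (-b * (z:ℂ) ^ 2 * (t:ℂ) ^ 2 / 16))
      = ∑' k : ℕ, ∫ t in Ioi (0:ℝ), F k t := by
    rw [setIntegral_congr_fun measurableSet_Ioi hpt]
    exact (integral_tsum_of_summable_integral_norm hInt hSum).symm
  rw [unifiedG, key, ← tsum_mul_left]
  refine tsum_congr fun k => ?_
  rw [hIF k, hw0]
  exact term_eq b c ν ρ hc hν hz2 k
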